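/- Let G be a graph and A ⊆ V(G) such that every connected component of G[A] has at most 2 vertices. Let Comp_2(G[A]) denote the number of size-2 components of G[A] and N_2(A) the set of vertices of N(A) adjacent to a vertex in some size-2 component of G[A]. If Comp_2(G[A]) > |N_2(A)|, then G admits a good decomposition (I, C, R) with ∅ ≠ I ⊆ A and C ⊆ N(A). -/
import Mathlib


open Finset

variable {V : Type*}

/-- vertex set of an (ordered) 3-path -/
def TripSet [DecidableEq V] (t : V × V × V) : Finset V := {t.1, t.2.1, t.2.2}

/-- a P3-packing: a collection of vertex-disjoint paths on three vertices -/
def IsP3Packing [DecidableEq V] (G : SimpleGraph V) (P : Finset (V × V × V)) : Prop :=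
  (∀ t ∈ P, G.Adj t.1 t.2.1 ∧ G.Adj t.2.1 t.2.2 ∧ t.1 ≠ t.2.2) ∧
  (∀ t ∈ P, ∀ s ∈ P, t ≠ s → Disjoint (TripSet t) (TripSet s))

/-- `D` is a 3-path vertex cover of the induced subgraph `G[S]` -/
def IsP3VCOn (G : SimpleGraph V) (S D : Finset V) : Prop :=
  ∀ a b c : V, a ∈ S → b ∈ S → c ∈ S → G.Adj a b → G.Adj b c → a ≠ c →
    a ∈ D ∨ b ∈ D ∨ c ∈ D

def IsP3VC (G : SimpleGraph V) (C : Finset V) : Prop :=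
  ∀ a b c : V, G.Adj a b → G.Adj b c → a ≠ c → a ∈ C ∨ b ∈ C ∨ c ∈ C

def NSet [Fintype V] [DecidableEq V] (G : SimpleGraph V) [DecidableRel G.Adj]
    (S : Finset V) : Finset V :=
  Finset.univ.filter (fun w => w ∉ S ∧ ∃ x ∈ S, G.Adj w x)

/-- a good decomposition `(I, C, R)` of `G` -/
def IsGoodDecomp [Fintype V] [DecidableEq V] (G : SimpleGraph V) [DecidableRel G.Adj]
    (I C R : Finset V) : Prop :=
  (I ∪ C ∪ R = Finset.univ) ∧ Disjoint I C ∧ Disjoint I R ∧ Disjoint C R ∧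
  (∀ a ∈ I, (I.filter (fun b => G.Adj a b)).card ≤ 1) ∧
  (∃ P : Finset (V × V × V), IsP3Packing G P ∧ (∀ t ∈ P, TripSet t ⊆ I ∪ C) ∧
    P.card = C.card) ∧
  (∀ a ∈ I, ∀ b ∈ R, ¬ G.Adj a b)

/-- if each component of `G[A]` has at most 2 vertices and the
number of size-2 components of `G[A]` exceeds `|N₂(A)|`, then `G` has a good
decomposition `(I, C, R)` with `∅ ≠ I ⊆ A` and `C ⊆ N(A)`. -/
theorem stmt9 [Fintype V] [DecidableEq V] (G : SimpleGraph V) [DecidableRel G.Adj]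
    (A : Finset V)
    (hsmall : ∀ c : (G.induce (↑A : Set V)).ConnectedComponent, c.supp.ncard ≤ 2)
    (hcond : Nat.card {c : (G.induce (↑A : Set V)).ConnectedComponent //
        c.supp.ncard = 2} >
      ((NSet G A).filter (fun w => ∃ a ∈ A, G.Adj w a ∧ ∃ b ∈ A, G.Adj a b)).card) :
    ∃ I C R : Finset V, IsGoodDecomp G I C R ∧ I.Nonempty ∧ I ⊆ A ∧
      C ⊆ NSet G A := by
  classical
  set N2 : Finset V :=
    (NSet G A).filter (fun w => ∃ a ∈ A, G.Adj w a ∧ ∃ b ∈ A, G.Adj a b) with hN2def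
  set G' := G.induce (↑A : Set V) with hG'
  set S2 : Finset G'.ConnectedComponent :=
    Finset.univ.filter (fun c => c.supp.ncard = 2) with hS2def
  -- basic membership facts
  have hN2sub : N2 ⊆ NSet G A := Finset.filter_subset _ _
  have hNSetnotA : ∀ w ∈ NSet G A, w ∉ A := by
    intro w hw
    simp only [NSet, Finset.mem_filter] at hw
    exact hw.2.1
  -- total count
  have hcard : N2.card < S2.card := by
    have : Nat.card {c : G'.ConnectedComponent // c.supp.ncard = 2} = S2.card := by
      rw [Nat.card_eq_fintype_card, hS2def]
      exact Fintype.card_subtype _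
    omega
  -- structure of size-2 components
  have hpair : ∀ c : G'.ConnectedComponent, c ∈ S2 →
      ∀ x : (↑A : Set V), G'.connectedComponentMk x = c →
      ∃ y : (↑A : Set V), x ≠ y ∧ c.supp = {x, y} ∧ G.Adj ↑x ↑y := by
    intro c hc x hx
    rw [hS2def, Finset.mem_filter] at hc
    obtain ⟨u, v, huv, hsupp⟩ := Set.ncard_eq_two.mp hc.2
    have hmku : G'.connectedComponentMk u = c := by
      have : u ∈ c.supp := by rw [hsupp]; exact Set.mem_insert _ _
      exact this
    have hmkv : G'.connectedComponentMk v = c := by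
      have : v ∈ c.supp := by rw [hsupp]; exact Set.mem_insert_of_mem _ rfl
      exact this
    have hr : G'.Reachable u v := by
      rw [← SimpleGraph.ConnectedComponent.eq, hmku, hmkv]
    have hadj : G'.Adj u v := by
      obtain ⟨w⟩ := hr
      cases w with
      | nil => exact absurd rfl huv
      | @cons _ z _ h p =>
        have hz : z ∈ c.supp := by
          have : G'.connectedComponentMk z = G'.connectedComponentMk u :=
            (SimpleGraph.ConnectedComponent.eq.mpr h.reachable).symm
          exact this.trans hmku
        rw [hsupp] at hz
        rcases hz with rfl | hz
        · exact absurd rfl h.ne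
        · rw [Set.mem_singleton_iff] at hz; subst hz; exact h
    have hxs : x ∈ c.supp := hx
    rw [hsupp] at hxs
    rcases hxs with rfl | hxs
    · exact ⟨v, huv, hsupp, hadj⟩
    · rw [Set.mem_singleton_iff] at hxs; subst hxs
      exact ⟨u, huv.symm, by rw [hsupp, Set.pair_comm], hadj.symm⟩
  -- a vertex of A with a neighbour in A lies in a size-2 component
  have hmkS2 : ∀ (a : (↑A : Set V)) (b : V), b ∈ A → G.Adj ↑a b →
      G'.connectedComponentMk a ∈ S2 := by
    intro a b hb hab
    have hbA : b ∈ (↑A : Set V) := hb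
    have hadj' : G'.Adj a ⟨b, hbA⟩ := hab
    have hsub : ({a, ⟨b, hbA⟩} : Set (↑A : Set V)) ⊆
        (G'.connectedComponentMk a).supp := by
      intro z hz
      rcases hz with rfl | hz
      · rfl
      · rw [Set.mem_singleton_iff] at hz; subst hz
        exact (SimpleGraph.ConnectedComponent.eq.mpr hadj'.symm.reachable)
    have hne : a ≠ ⟨b, hbA⟩ := by
      intro h
      exact G.ne_of_adj hab (by rw [h])
    have h2 : 2 ≤ (G'.connectedComponentMk a).supp.ncard := by
      have := Set.ncard_le_ncard hsub (Set.toFinite _)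
      rwa [Set.ncard_pair hne] at this
    rw [hS2def, Finset.mem_filter]
    exact ⟨Finset.mem_univ _, le_antisymm (hsmall _) h2⟩
  -- the neighbourhood (in N2) of a component
  set nbr : G'.ConnectedComponent → Finset V := fun c =>
    N2.filter (fun w => ∃ x : (↑A : Set V), G.Adj w ↑x ∧
      G'.connectedComponentMk x = c) with hnbrdef
  have hnbrsub : ∀ c, nbr c ⊆ N2 := fun c => Finset.filter_subset _ _
  -- every S2 component's biUnion is inside N2
  have hbU : ∀ S : Finset G'.ConnectedComponent, (S.biUnion nbr) ⊆ N2 := by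
    intro S w hw
    rw [Finset.mem_biUnion] at hw
    obtain ⟨c, _, hc⟩ := hw
    exact hnbrsub c hc
  -- minimal bad set
  have hex : ∃ n, ∃ S : Finset G'.ConnectedComponent, S ⊆ S2 ∧ S.Nonempty ∧
      (S.biUnion nbr).card < S.card ∧ S.card = n := by
    refine ⟨S2.card, S2, le_refl _, ?_, ?_, rfl⟩
    · rw [← Finset.card_pos]; omega
    · exact lt_of_le_of_lt (Finset.card_le_card (hbU S2)) hcard
  obtain ⟨S, hSsub, hSne, hSlt, hScard⟩ := Nat.find_spec hex
  have hmin : ∀ S' : Finset G'.ConnectedComponent, S' ⊆ S2 → S'.Nonempty →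
      (S'.biUnion nbr).card < S'.card → Nat.find hex ≤ S'.card := by
    intro S' h1 h2 h3
    exact Nat.find_le ⟨S', h1, h2, h3, rfl⟩
  set NH : Finset V := S.biUnion nbr with hNHdef
  -- Hall condition
  have hall : ∀ s : Finset {w // w ∈ NH},
      s.card ≤ (s.biUnion (fun w => S.filter (fun c => w.1 ∈ nbr c))).card := by
    by_contra hno
    push_neg at hno
    obtain ⟨s, hs⟩ := hno
    set B := s.biUnion (fun w => S.filter (fun c => w.1 ∈ nbr c)) with hBdef
    set W := s.image Subtype.val with hWdef
    have hWcard : W.card = s.card := Finset.card_image_of_injective _ Subtype.val_injective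
    have hWsub : W ⊆ NH := by
      intro w hw
      rw [hWdef, Finset.mem_image] at hw
      obtain ⟨u, _, rfl⟩ := hw
      exact u.2
    have hBsubS : B ⊆ S := by
      intro c hc
      rw [hBdef, Finset.mem_biUnion] at hc
      obtain ⟨u, _, hc⟩ := hc
      exact (Finset.mem_filter.mp hc).1
    have hsne : s.Nonempty := by
      rw [← Finset.card_pos]; omega
    have hBne : B.Nonempty := by
      obtain ⟨u, hu⟩ := hsne
      obtain ⟨c, hcS, hcn⟩ := Finset.mem_biUnion.mp u.2
      exact ⟨c, Finset.mem_biUnion.mpr ⟨u, hu, Finset.mem_filter.mpr ⟨hcS, hcn⟩⟩⟩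
    set S' := S \ B with hS'def
    have hS'card : S'.card = S.card - B.card := Finset.card_sdiff_of_subset hBsubS
    have hS'lt : S'.card < S.card := by
      have hBpos : 0 < B.card := Finset.card_pos.mpr hBne
      have hBle : B.card ≤ S.card := Finset.card_le_card hBsubS
      omega
    have hNH'sub : S'.biUnion nbr ⊆ NH \ W := by
      intro w hw
      rw [Finset.mem_biUnion] at hw
      obtain ⟨c, hcS', hcn⟩ := hw
      rw [hS'def, Finset.mem_sdiff] at hcS'
      rw [Finset.mem_sdiff]
      constructor
      · exact Finset.mem_biUnion.mpr ⟨c, hcS'.1, hcn⟩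
      · intro hwW
        rw [hWdef, Finset.mem_image] at hwW
        obtain ⟨u, hus, hueq⟩ := hwW
        apply hcS'.2
        rw [hBdef, Finset.mem_biUnion]
        exact ⟨u, hus, Finset.mem_filter.mpr ⟨hcS'.1, by rw [hueq]; exact hcn⟩⟩
    have hNW : (NH \ W).card = NH.card - W.card := Finset.card_sdiff_of_subset hWsub
    have hkey : (S'.biUnion nbr).card < S'.card := by
      have h1 : (S'.biUnion nbr).card ≤ NH.card - W.card := by
        rw [← hNW]; exact Finset.card_le_card hNH'sub
      have h2 : B.card < s.card := hs
      have h3 : W.card ≤ NH.card := Finset.card_le_card hWsub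
      omega
    have hS'ne : S'.Nonempty := by
      rw [← Finset.card_pos]; omega
    have := hmin S' (hS'def ▸ (Finset.sdiff_subset.trans hSsub)) hS'ne hkey
    omega
  -- apply Hall's theorem
  obtain ⟨f, hfinj, hfmem⟩ :=
    (Finset.all_card_le_biUnion_card_iff_exists_injective
      (fun w : {w // w ∈ NH} => S.filter (fun c => w.1 ∈ nbr c))).mp hall
  have hfS : ∀ w, f w ∈ S := fun w => (Finset.mem_filter.mp (hfmem w)).1
  have hfnbr : ∀ w, w.1 ∈ nbr (f w) := fun w => (Finset.mem_filter.mp (hfmem w)).2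
  -- choose the triple data
  have hdata : ∀ w : {w // w ∈ NH}, ∃ x y : (↑A : Set V),
      G.Adj w.1 ↑x ∧ G'.connectedComponentMk x = f w ∧ x ≠ y ∧
      (f w).supp = {x, y} ∧ G.Adj ↑x ↑y := by
    intro w
    have := hfnbr w
    rw [hnbrdef, Finset.mem_filter] at this
    obtain ⟨_, x, hwx, hx⟩ := this
    obtain ⟨y, hxy, hsupp, hadj⟩ := hpair (f w) (hSsub (hfS w)) x hx
    exact ⟨x, y, hwx, hx, hxy, hsupp, hadj⟩
  choose xf yf hadj1 hmk hne hsupp hadj2 using hdata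
  -- define the decomposition
  set I : Finset V := univ.filter (fun v =>
    ∃ h : v ∈ (↑A : Set V), G'.connectedComponentMk ⟨v, h⟩ ∈ S) with hIdef
  have hImem : ∀ v : V, v ∈ I ↔
      ∃ h : v ∈ (↑A : Set V), G'.connectedComponentMk ⟨v, h⟩ ∈ S := by
    intro v; rw [hIdef, Finset.mem_filter]; simp
  have hIsubA : I ⊆ A := by
    intro v hv
    obtain ⟨h, _⟩ := (hImem v).mp hv
    exact h
  -- every element of a component in S is in I
  have hIofmk : ∀ x : (↑A : Set V), G'.connectedComponentMk x ∈ S → ↑x ∈ I := by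
    intro x hx
    rw [hImem]
    exact ⟨x.2, by convert hx⟩
  have hCsub : NH ⊆ NSet G A := fun w hw => hN2sub (hbU S hw)
  -- main pieces
  refine ⟨I, NH, univ \ (I ∪ NH), ?_, ?_, hIsubA, hCsub⟩
  · constructor
    · exact Finset.union_sdiff_of_subset (Finset.subset_univ _)
    constructor
    · rw [Finset.disjoint_left]
      intro v hvI hvN
      exact hNSetnotA v (hCsub hvN) (hIsubA hvI)
    constructor
    · rw [Finset.disjoint_left]
      intro v hvI hvR
      exact (Finset.mem_sdiff.mp hvR).2 (Finset.mem_union_left _ hvI)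
    constructor
    · rw [Finset.disjoint_left]
      intro v hvN hvR
      exact (Finset.mem_sdiff.mp hvR).2 (Finset.mem_union_right _ hvN)
    constructor
    · -- max degree at most one in I
      intro a haI
      obtain ⟨ha, hmkaS⟩ := (hImem a).mp haI
      obtain ⟨y, hay, hsuppa, hadja⟩ := hpair _ (hSsub hmkaS) ⟨a, ha⟩ rfl
      have hsub : I.filter (fun b => G.Adj a b) ⊆ {↑y} := by
        intro b hb
        rw [Finset.mem_filter] at hb
        obtain ⟨hbI, hab⟩ := hb
        obtain ⟨hbA, _⟩ := (hImem b).mp hbI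
        have hadjb : G'.Adj ⟨a, ha⟩ ⟨b, hbA⟩ := hab
        have hmkb : (⟨b, hbA⟩ : (↑A : Set V)) ∈
            (G'.connectedComponentMk ⟨a, ha⟩).supp :=
          SimpleGraph.ConnectedComponent.eq.mpr hadjb.symm.reachable
        rw [hsuppa] at hmkb
        rcases hmkb with h | h
        · exact absurd (congrArg Subtype.val h) (G.ne_of_adj hab).symm
        · rw [Set.mem_singleton_iff] at h
          rw [Finset.mem_singleton]
          exact congrArg Subtype.val h
      exact le_trans (Finset.card_le_card hsub) (by simp)
    constructor
    · -- the P3-packing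
      have hmky : ∀ u, G'.connectedComponentMk (yf u) = f u := by
        intro u
        have : yf u ∈ (f u).supp := by
          rw [hsupp u]; exact Set.mem_insert_of_mem _ rfl
        exact this
      have hinj : Function.Injective
          (fun w : {w // w ∈ NH} => (w.1, (↑(xf w) : V), (↑(yf w) : V))) := by
        intro a b h
        exact Subtype.ext (congrArg Prod.fst h)
      refine ⟨NH.attach.image
        (fun w : {w // w ∈ NH} => (w.1, (↑(xf w) : V), (↑(yf w) : V))), ⟨?_, ?_⟩, ?_, ?_⟩
      · intro t ht
        rw [Finset.mem_image] at ht
        obtain ⟨w, _, rfl⟩ := ht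
        refine ⟨hadj1 w, hadj2 w, ?_⟩
        intro h
        have h' : (w : V) = ↑(yf w) := h
        exact hNSetnotA _ (hCsub w.2) (by rw [h']; exact Finset.mem_coe.mp (yf w).2)
      · intro t ht s hs hts
        rw [Finset.mem_image] at ht hs
        obtain ⟨w, _, rfl⟩ := ht
        obtain ⟨w', _, rfl⟩ := hs
        have hww : w ≠ w' := by rintro rfl; exact hts rfl
        have hcomp : f w ≠ f w' := fun h => hww (hfinj h)
        have hdiffA : ∀ (p q : (↑A : Set V)), G'.connectedComponentMk p = f w →
            G'.connectedComponentMk q = f w' → (↑p : V) ≠ ↑q := by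
          intro p q hp hq h
          apply hcomp
          rw [← hp, ← hq]
          congr 1
          exact Subtype.ext h
        have hwA : (w : V) ∉ A := hNSetnotA _ (hCsub w.2)
        have hw'A : (w' : V) ∉ A := hNSetnotA _ (hCsub w'.2)
        rw [Finset.disjoint_left]
        intro z hz hz'
        simp only [TripSet, Finset.mem_insert, Finset.mem_singleton] at hz hz'
        rcases hz with rfl | rfl | rfl
        · rcases hz' with h | h | h
          · exact hww (Subtype.ext h)
          · exact hwA (by rw [h]; exact Finset.mem_coe.mp (xf w').2)
          · exact hwA (by rw [h]; exact Finset.mem_coe.mp (yf w').2)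
        · rcases hz' with h | h | h
          · exact hw'A (by rw [← h]; exact Finset.mem_coe.mp (xf w).2)
          · exact hdiffA _ _ (hmk w) (hmk w') h
          · exact hdiffA _ _ (hmk w) (hmky w') h
        · rcases hz' with h | h | h
          · exact hw'A (by rw [← h]; exact Finset.mem_coe.mp (yf w).2)
          · exact hdiffA _ _ (hmky w) (hmk w') h
          · exact hdiffA _ _ (hmky w) (hmky w') h
      · intro t ht
        rw [Finset.mem_image] at ht
        obtain ⟨w, _, rfl⟩ := ht
        intro z hz
        simp only [TripSet, Finset.mem_insert, Finset.mem_singleton] at hz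
        rcases hz with rfl | rfl | rfl
        · exact Finset.mem_union_right _ w.2
        · exact Finset.mem_union_left _ (hIofmk _ ((hmk w).symm ▸ hfS w))
        · exact Finset.mem_union_left _ (hIofmk _ ((hmky w).symm ▸ hfS w))
      · rw [Finset.card_image_of_injective _ hinj, Finset.card_attach]
    · -- no edges between I and R
      intro a haI b hbR hab
      obtain ⟨ha, hmkaS⟩ := (hImem a).mp haI
      have hbIC : b ∈ I ∪ NH := by
        by_cases hbA : b ∈ (↑A : Set V)
        · apply Finset.mem_union_left
          apply hIofmk ⟨b, hbA⟩
          have heq : G'.connectedComponentMk ⟨b, hbA⟩ =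
              G'.connectedComponentMk ⟨a, ha⟩ :=
            SimpleGraph.ConnectedComponent.eq.mpr
              (show G'.Adj ⟨b, hbA⟩ ⟨a, ha⟩ from hab.symm).reachable
          rw [heq]; exact hmkaS
        · obtain ⟨y, hay, hsuppa, hadja⟩ := hpair _ (hSsub hmkaS) ⟨a, ha⟩ rfl
          have hbN : b ∈ NSet G A := by
            simp only [NSet, Finset.mem_filter, Finset.mem_univ, true_and]
            exact ⟨fun h => hbA h, a, hIsubA haI, hab.symm⟩
          have hbN2 : b ∈ N2 := by
            rw [hN2def, Finset.mem_filter]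
            exact ⟨hbN, a, hIsubA haI, hab.symm, ↑y, Finset.mem_coe.mp y.2, hadja⟩
          apply Finset.mem_union_right
          apply Finset.mem_biUnion.mpr
          refine ⟨_, hmkaS, ?_⟩
          exact Finset.mem_filter.mpr ⟨hbN2, ⟨a, ha⟩, hab.symm, rfl⟩
      exact (Finset.mem_sdiff.mp hbR).2 hbIC
  · -- I nonempty
    obtain ⟨c, hc⟩ := hSne
    obtain ⟨u, v, huv, hsupp'⟩ := Set.ncard_eq_two.mp
      (Finset.mem_filter.mp (hSsub hc)).2
    have : G'.connectedComponentMk u = c := by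
      have : u ∈ c.supp := by rw [hsupp']; exact Set.mem_insert _ _
      exact this
    exact ⟨↑u, hIofmk u (this ▸ hc)⟩
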